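/- A finitely generated right S-semimodule P is projective (respectively, strongly projective) if and only if there exist a positive integer n and an idempotent matrix A ∈ M_n(S) (respectively, an idempotent matrix A with a complementary idempotent B satisfying A + B = I and AB = BA = 0) such that A(Sⁿ) ≅ P, where A(Sⁿ) is the subsemimodule of Sⁿ generated by the columns of A. -/

import Mathlib

/-- `p` and `q` decompose `M` as an (internal) direct sum. -/
def IsSummandDecomp {S M : Type} [Semiring S] [AddCommMonoid M] [Module S M]
    (p q : Submodule S M) : Prop :=
  Function.Bijective fun ab : p × q => (ab.1 : M) + (ab.2 : M)

/-- A semimodule is strongly projective if it is isomorphic to a direct summand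
of a free semimodule. -/
def StronglyProjective (S P : Type) [Semiring S] [AddCommMonoid P] [Module S P] : Prop :=
  ∃ (ι : Type) (p q : Submodule S (ι →₀ S)), IsSummandDecomp p q ∧ Nonempty (P ≃ₗ[S] p)

/-- A semimodule is finitely generated strongly projective if it is isomorphic to a
direct summand of a finitely generated free semimodule. -/
def FGStronglyProjective (S P : Type) [Semiring S] [AddCommMonoid P] [Module S P] : Prop :=
  ∃ (n : ℕ) (p q : Submodule S (Fin n → S)), IsSummandDecomp p q ∧ Nonempty (P ≃ₗ[S] p)

section Aux

variable {S : Type} [Semiring S] {n : ℕ}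

/-- An idempotent endomorphism fixes its range. -/
lemma idem_fix {M : Type*} [AddCommMonoid M] [Module S M] (e : M →ₗ[S] M)
    (h : e ∘ₗ e = e) {x : M} (hx : x ∈ LinearMap.range e) : e x = x := by
  obtain ⟨y, rfl⟩ := hx
  rw [← LinearMap.comp_apply, h]

/-- The range of an idempotent endomorphism of a free module is projective. -/
lemma proj_of_idem (e : (Fin n → S) →ₗ[S] (Fin n → S)) (h : e ∘ₗ e = e) :
    Module.Projective S (LinearMap.range e) := by
  refine Module.Projective.of_split (LinearMap.range e).subtype e.rangeRestrict ?_
  apply LinearMap.ext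
  rintro ⟨x, hx⟩
  exact Subtype.ext (idem_fix e h hx)

lemma range_toLinearMapRight' (A : Matrix (Fin n) (Fin n) S) :
    LinearMap.range (Matrix.toLinearMapRight' A) = Submodule.span S (Set.range fun i => A i) := by
  exact range_vecMulLinear A

end Aux

/-- A finitely generated semimodule `P` is projective (resp. strongly projective) iff
`P ≅ A(Sⁿ)` for an idempotent matrix `A` (resp. a strongly idempotent matrix `A`,
i.e. one with a complementary orthogonal idempotent `B`), where `A(Sⁿ)` is the
subsemimodule of `Sⁿ` generated by the rows of `A`. -/
theorem fg_projective_iff_idempotent_matrix (S P : Type) [Semiring S] [AddCommMonoid P]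
    [Module S P] (hfg : Module.Finite S P) :
    (Module.Projective S P ↔
      ∃ (n : ℕ) (_ : 0 < n) (A : Matrix (Fin n) (Fin n) S), A * A = A ∧
        Nonempty (P ≃ₗ[S] (Submodule.span S (Set.range fun i => A i) : Submodule S (Fin n → S))))
    ∧ (FGStronglyProjective S P ↔
      ∃ (n : ℕ) (_ : 0 < n) (A B : Matrix (Fin n) (Fin n) S), A * A = A ∧
        A + B = 1 ∧ A * B = 0 ∧ B * A = 0 ∧
        Nonempty (P ≃ₗ[S] (Submodule.span S (Set.range fun i => A i) : Submodule S (Fin n → S)))) := by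
  constructor
  · constructor
    · intro hproj
      -- get a surjection from a nontrivial finite free module
      obtain ⟨m, f, hf⟩ := Module.Finite.exists_fin' S P
      set f' : (Fin (m + 1) → S) →ₗ[S] P :=
        f ∘ₗ LinearMap.funLeft S S Fin.castSucc with hf'def
      have hf' : Function.Surjective f' := by
        exact hf.comp (LinearMap.funLeft_surjective_of_injective S S _
          (Fin.castSucc_injective m))
      obtain ⟨g, hg⟩ := f'.exists_rightInverse_of_surjective (LinearMap.range_eq_top.2 hf')
      set e : (Fin (m + 1) → S) →ₗ[S] (Fin (m + 1) → S) := g ∘ₗ f' with hedef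
      have hee : e ∘ₗ e = e := by
        rw [hedef, LinearMap.comp_assoc, ← LinearMap.comp_assoc f' g f', hg,
          LinearMap.id_comp]
      have hginj : Function.Injective g := by
        intro a b hab
        have := congrArg f' hab
        rw [← LinearMap.comp_apply, ← LinearMap.comp_apply, hg] at this
        exact this
      have hrange : LinearMap.range e = LinearMap.range g := by
        rw [hedef, LinearMap.range_comp, LinearMap.range_eq_top.2 hf', Submodule.map_top]
      -- the matrix of e
      set A : Matrix (Fin (m + 1)) (Fin (m + 1)) S := LinearMap.toMatrixRight' e with hAdef
      have hA : Matrix.toLinearMapRight' A = e := LinearMap.toMatrixRight'.symm_apply_apply e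
      refine ⟨m + 1, Nat.succ_pos m, A, ?_, ?_⟩
      · apply Matrix.toLinearMapRight'.injective
        rw [Matrix.toLinearMapRight'_mul, hA, hee]
      · have h1 : LinearMap.range (Matrix.toLinearMapRight' A)
            = Submodule.span S (Set.range fun i => A i) := range_toLinearMapRight' A
        rw [hA, hrange] at h1
        exact ⟨(LinearEquiv.ofInjective g hginj).trans (LinearEquiv.ofEq _ _ h1)⟩
    · rintro ⟨n, -, A, hAA, ⟨eqv⟩⟩
      set e : (Fin n → S) →ₗ[S] (Fin n → S) := Matrix.toLinearMapRight' A with hedef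
      have hee : e ∘ₗ e = e := by
        rw [hedef, ← Matrix.toLinearMapRight'_mul, hAA]
      have h1 : LinearMap.range e = Submodule.span S (Set.range fun i => A i) :=
        range_toLinearMapRight' A
      have hp := proj_of_idem e hee
      exact Module.Projective.of_equiv
        ((LinearEquiv.ofEq _ _ h1).trans eqv.symm)
  · constructor
    · rintro ⟨n, p, q, hbij, ⟨eqv⟩⟩
      rcases Nat.eq_zero_or_pos n with hn | hn
      · -- degenerate case: everything is trivial
        subst hn
        have : Subsingleton (Fin 0 → S) := by infer_instance
        have hsub : Subsingleton p := by infer_instance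
        have hsubP : Subsingleton P := eqv.toEquiv.subsingleton
        refine ⟨1, Nat.one_pos, 0, 1, by simp, by simp, by simp, by simp, ?_⟩
        have : Subsingleton
            (Submodule.span S (Set.range fun i => (0 : Matrix (Fin 1) (Fin 1) S) i)
              : Submodule S (Fin 1 → S)) := by
          have h0 : (Set.range fun i => (0 : Matrix (Fin 1) (Fin 1) S) i) = {0} := by
            ext x
            simp [eq_comm]
            exact Iff.rfl
          rw [h0, Submodule.span_zero_singleton]
          infer_instance
        exact ⟨LinearEquiv.ofSubsingleton _ _⟩
      · -- build the idempotent pair from the decomposition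
        set Φ : p × q →ₗ[S] (Fin n → S) := p.subtype.coprod q.subtype with hΦdef
        have hΦbij : Function.Bijective Φ := hbij
        set Ψ : (p × q) ≃ₗ[S] (Fin n → S) := LinearEquiv.ofBijective Φ hΦbij with hΨdef
        set e : (Fin n → S) →ₗ[S] (Fin n → S) :=
          p.subtype ∘ₗ (LinearMap.fst S p q) ∘ₗ Ψ.symm.toLinearMap with hedef
        set e' : (Fin n → S) →ₗ[S] (Fin n → S) :=
          q.subtype ∘ₗ (LinearMap.snd S p q) ∘ₗ Ψ.symm.toLinearMap with he'def
        have hΨp : ∀ a : p, Ψ.symm (a : Fin n → S) = (a, 0) := by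
          intro a
          rw [LinearEquiv.symm_apply_eq]
          symm
          show (Φ (a, 0) : Fin n → S) = a
          simp [hΦdef]
        have hΨq : ∀ b : q, Ψ.symm (b : Fin n → S) = (0, b) := by
          intro b
          rw [LinearEquiv.symm_apply_eq]
          symm
          show (Φ (0, b) : Fin n → S) = b
          simp [hΦdef]
        have hep : ∀ a : p, e (a : Fin n → S) = a := by
          intro a; simp [hedef, hΨp a]
        have heq : ∀ b : q, e (b : Fin n → S) = 0 := by
          intro b; simp [hedef, hΨq b]
        have he'p : ∀ a : p, e' (a : Fin n → S) = 0 := by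
          intro a; simp [he'def, hΨp a]
        have he'q : ∀ b : q, e' (b : Fin n → S) = b := by
          intro b; simp [he'def, hΨq b]
        have hsum : e + e' = LinearMap.id := by
          apply LinearMap.ext
          intro x
          show (((Ψ.symm x).1 : Fin n → S)) + (((Ψ.symm x).2 : Fin n → S)) = x
          have := Ψ.apply_symm_apply x
          exact this
        have hxp : ∀ x, e x ∈ p := fun x => ((Ψ.symm x).1).2
        have hxq : ∀ x, e' x ∈ q := fun x => ((Ψ.symm x).2).2
        have hee : e ∘ₗ e = e := by
          apply LinearMap.ext; intro x; exact hep ⟨e x, hxp x⟩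
        have he'e : e' ∘ₗ e = 0 := by
          apply LinearMap.ext; intro x; exact he'p ⟨e x, hxp x⟩
        have hee' : e ∘ₗ e' = 0 := by
          apply LinearMap.ext; intro x; exact heq ⟨e' x, hxq x⟩
        have hrange : LinearMap.range e = p := by
          apply le_antisymm
          · rintro _ ⟨x, rfl⟩; exact hxp x
          · intro a ha; exact ⟨a, hep ⟨a, ha⟩⟩
        set A : Matrix (Fin n) (Fin n) S := LinearMap.toMatrixRight' e with hAdef
        set B : Matrix (Fin n) (Fin n) S := LinearMap.toMatrixRight' e' with hBdef
        have hA : Matrix.toLinearMapRight' A = e := LinearMap.toMatrixRight'.symm_apply_apply e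
        have hB : Matrix.toLinearMapRight' B = e' := LinearMap.toMatrixRight'.symm_apply_apply e'
        refine ⟨n, hn, A, B, ?_, ?_, ?_, ?_, ?_⟩
        · apply Matrix.toLinearMapRight'.injective
          rw [Matrix.toLinearMapRight'_mul, hA, hee]
        · apply Matrix.toLinearMapRight'.injective
          rw [map_add, hA, hB, hsum, Matrix.toLinearMapRight'_one]
        · apply Matrix.toLinearMapRight'.injective
          rw [Matrix.toLinearMapRight'_mul, hA, hB, he'e, map_zero]
        · apply Matrix.toLinearMapRight'.injective
          rw [Matrix.toLinearMapRight'_mul, hA, hB, hee', map_zero]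
        · have h1 : LinearMap.range (Matrix.toLinearMapRight' A)
              = Submodule.span S (Set.range fun i => A i) := range_toLinearMapRight' A
          rw [hA, hrange] at h1
          exact ⟨eqv.trans (LinearEquiv.ofEq _ _ h1)⟩
    · rintro ⟨n, -, A, B, hAA, hABsum, hAB, hBA, ⟨eqv⟩⟩
      set e : (Fin n → S) →ₗ[S] (Fin n → S) := Matrix.toLinearMapRight' A with hedef
      set e' : (Fin n → S) →ₗ[S] (Fin n → S) := Matrix.toLinearMapRight' B with he'def
      have hee : e ∘ₗ e = e := by
        rw [hedef, ← Matrix.toLinearMapRight'_mul, hAA]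
      have hsum : e + e' = LinearMap.id := by
        rw [hedef, he'def, ← map_add, hABsum, Matrix.toLinearMapRight'_one]
      have he'e : e' ∘ₗ e = 0 := by
        rw [hedef, he'def, ← Matrix.toLinearMapRight'_mul, hAB, map_zero]
      have hee' : e ∘ₗ e' = 0 := by
        rw [hedef, he'def, ← Matrix.toLinearMapRight'_mul, hBA, map_zero]
      have he'e' : e' ∘ₗ e' = e' := by
        have : e' ∘ₗ (e + e') = e' := by rw [hsum]; apply LinearMap.ext; intro x; rfl
        rwa [LinearMap.comp_add, he'e, zero_add] at this
      set p := LinearMap.range e with hpdef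
      set q := LinearMap.range e' with hqdef
      have hef : ∀ x ∈ p, e x = x := fun x hx => idem_fix e hee hx
      have he'f : ∀ x ∈ q, e' x = x := fun x hx => idem_fix e' he'e' hx
      have hekill : ∀ x ∈ q, e x = 0 := by
        rintro _ ⟨y, rfl⟩
        rw [← LinearMap.comp_apply, hee']
        rfl
      have he'kill : ∀ x ∈ p, e' x = 0 := by
        rintro _ ⟨y, rfl⟩
        rw [← LinearMap.comp_apply, he'e]
        rfl
      refine ⟨n, p, q, ⟨?_, ?_⟩, ?_⟩
      · rintro ⟨⟨a, ha⟩, ⟨b, hb⟩⟩ ⟨⟨a', ha'⟩, ⟨b', hb'⟩⟩ h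
        simp only at h
        have h1 : a = a' := by
          have := congrArg e h
          rwa [map_add, map_add, hef a ha, hef a' ha', hekill b hb, hekill b' hb',
            add_zero, add_zero] at this
        have h2 : b = b' := by
          have := congrArg e' h
          rwa [map_add, map_add, he'f b hb, he'f b' hb', he'kill a ha, he'kill a' ha',
            zero_add, zero_add] at this
        simp [h1, h2]
      · intro x
        refine ⟨⟨⟨e x, ⟨x, rfl⟩⟩, ⟨e' x, ⟨x, rfl⟩⟩⟩, ?_⟩
        show e x + e' x = x
        have := congrFun (congrArg (DFunLike.coe) hsum) x
        exact this
      · have h1 : LinearMap.range (Matrix.toLinearMapRight' A)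
            = Submodule.span S (Set.range fun i => A i) := range_toLinearMapRight' A
        exact ⟨eqv.trans (LinearEquiv.ofEq _ _ h1.symm)⟩
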